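/- Let R be the renormalization on probability measures on X̄ = X ∪ {∂}: R(ν) = (ν|_X / ν(X), 0) if ν(X) ≠ 0 and R(ν) = δ_∂ otherwise. Then for self-mappings f, f' of X and subsets S, S' ⊆ X, one has R ∘ (f→_S)⋆ ∘ R ∘ (f'→_{S'})⋆ = R ∘ (f→_S ∘ f'→_{S'})⋆ as self-maps on probability measures on X̄; i.e., the renormalization can be factored out of compositions of pushforwards by forward mappings. -/

import Mathlib

open scoped Classical

/-- Forward mapping `f→_S : X̄ → X̄` (`∂` encoded by `none`). -/
noncomputable def forward {X : Type*} (f : X → X) (S : Finset X) :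
    Option X → Option X
  | none => none
  | some x => if f x ∈ S then some (f x) else none

/-- Pushforward of a finitely supported measure on `X̄` by a self-mapping of `X̄`. -/
noncomputable def push {X : Type*} [Fintype X] (g : Option X → Option X)
    (ν : Option X → NNReal) : Option X → NNReal :=
  fun o => ∑ o' ∈ Finset.univ.filter (fun o' => g o' = o), ν o'

/-- Renormalization: the normalized restriction of `ν` to `X` when `ν(X) ≠ 0`,
and the Dirac measure at the cemetery point `∂` otherwise. -/
noncomputable def renorm {X : Type*} [Fintype X] (ν : Option X → NNReal) :
    Option X → NNReal :=
  if (∑ x : X, ν (some x)) = 0 then (fun o => if o = none then 1 else 0)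
  else fun o =>
    match o with
    | none => 0
    | some x => ν (some x) / ∑ x : X, ν (some x)

/-- Pushforwards compose. -/
lemma push_comp {X : Type*} [Fintype X] (g h : Option X → Option X)
    (ν : Option X → NNReal) : push g (push h ν) = push (g ∘ h) ν := by
  funext o
  simp only [push, Finset.sum_filter, Function.comp]
  calc (∑ a : Option X, if g a = o then ∑ b : Option X, if h b = a then ν b else 0 else 0)
      = ∑ a : Option X, ∑ b : Option X, (if h b = a then (if g a = o then ν b else 0) else 0) := by
        refine Finset.sum_congr rfl fun a _ => ?_
        split_ifs with hg <;> simp [hg]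
    _ = ∑ b : Option X, ∑ a : Option X, (if h b = a then (if g a = o then ν b else 0) else 0) :=
        Finset.sum_comm
    _ = ∑ b : Option X, if g (h b) = o then ν b else 0 := by
        refine Finset.sum_congr rfl fun b _ => ?_
        simp [Finset.sum_ite_eq]

lemma renorm_none_of_ne {X : Type*} [Fintype X] {ν : Option X → NNReal}
    (hc : (∑ x : X, ν (some x)) ≠ 0) : renorm ν none = 0 := by
  rw [renorm, if_neg hc]

lemma renorm_some_of_ne {X : Type*} [Fintype X] {ν : Option X → NNReal}
    (hc : (∑ x : X, ν (some x)) ≠ 0) (y : X) :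
    renorm ν (some y) = ν (some y) / ∑ x : X, ν (some x) := by
  rw [renorm, if_neg hc]

/-- On points of `X`, pushing forward a renormalized measure is pushing forward
the measure and dividing by the mass. -/
lemma push_renorm {X : Type*} [Fintype X] (f : X → X) (S : Finset X)
    (μ : Option X → NNReal) (hc : (∑ x : X, μ (some x)) ≠ 0) (y : X) :
    push (forward f S) (renorm μ) (some y) =
      push (forward f S) μ (some y) / ∑ x : X, μ (some x) := by
  simp only [push, renorm, if_neg hc, Finset.sum_div]
  refine Finset.sum_congr rfl fun o' ho' => ?_
  rcases o' with _ | x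
  · exact absurd (Finset.mem_filter.mp ho').2 (fun h => Option.some_ne_none y (h : (none : Option X) = some y).symm)
  · rfl

lemma div_div_div_c {a c m : NNReal} (hc : c ≠ 0) (hm : m ≠ 0) :
    a / c / (m / c) = a / m := by
  field_simp

/-- The renormalization factors out of compositions of pushforwards by forward
mappings: `R ∘ (f→_S)⋆ ∘ R ∘ (f'→_{S'})⋆ = R ∘ (f→_S ∘ f'→_{S'})⋆` on probability
measures on `X̄`. -/
theorem renorm_push_forward_comp {X : Type*} [Fintype X]
    (f f' : X → X) (S S' : Finset X) :
    ∀ ν : Option X → NNReal, (∑ o : Option X, ν o = 1) →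
      renorm (push (forward f S) (renorm (push (forward f' S') ν))) =
        renorm (push (forward f S ∘ forward f' S') ν) := by
  intro ν hν
  rw [← push_comp]
  set μ := push (forward f' S') ν with hμ
  by_cases hc : (∑ x : X, μ (some x)) = 0
  · have hzero : ∀ x : X, μ (some x) = 0 := by
      intro x
      exact le_antisymm (hc ▸ Finset.single_le_sum (f := fun x => μ (some x))
        (fun _ _ => zero_le) (Finset.mem_univ x)) zero_le
    have h1 : renorm μ = fun o => if o = none then 1 else 0 := by
      rw [renorm, if_pos hc]
    have h2 : ∀ y : X, push (forward f S) (renorm μ) (some y) = 0 := by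
      intro y
      rw [h1]
      simp only [push]
      refine Finset.sum_eq_zero fun o' ho' => ?_
      rcases o' with _ | x
      · exact absurd (Finset.mem_filter.mp ho').2 (fun h => Option.some_ne_none y (h : (none : Option X) = some y).symm)
      · simp
    have h3 : ∀ y : X, push (forward f S) μ (some y) = 0 := by
      intro y
      simp only [push]
      refine Finset.sum_eq_zero fun o' ho' => ?_
      rcases o' with _ | x
      · exact absurd (Finset.mem_filter.mp ho').2 (fun h => Option.some_ne_none y (h : (none : Option X) = some y).symm)
      · exact hzero x
    rw [renorm, if_pos (Finset.sum_eq_zero fun y _ => h2 y),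
        renorm, if_pos (Finset.sum_eq_zero fun y _ => h3 y)]
  · set c := ∑ x : X, μ (some x) with hcdef
    set m := ∑ y : X, push (forward f S) μ (some y) with hmdef
    have hLmass : (∑ y : X, push (forward f S) (renorm μ) (some y)) = m / c := by
      rw [hmdef, Finset.sum_div]
      exact Finset.sum_congr rfl fun y _ => push_renorm f S μ hc y
    by_cases hm : m = 0
    · rw [renorm, if_pos (by rw [hLmass, hm, zero_div]),
        renorm, if_pos (show (∑ x : X, push (forward f S) μ (some x)) = 0 from hm)]
    · have hA : (∑ y : X, push (forward f S) (renorm μ) (some y)) ≠ 0 := by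
        rw [hLmass]
        simp [div_eq_zero_iff, hm, hc]
      funext o
      rcases o with _ | y
      · rw [renorm_none_of_ne hA, renorm_none_of_ne hm]
      · rw [renorm_some_of_ne hA y, renorm_some_of_ne hm y, hLmass,
          push_renorm f S μ hc y, div_div_div_c hc hm]
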